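/- arXiv:2002.03569 — 8 statements merged into one kernel-verified Lean document; each statement's English description precedes it below -/
import Mathlib

section
/- If p·k ≤ 1, then for all q ∈ (0,1], f_p(q) < q, where f_p(q) = 1 - (1 - p·q)^k with k ≥ 2; hence 0 is the only fixed point of f_p in [0,1]. -/
theorem stmt2 (p : ℝ) (hp : p ∈ Set.Icc (0:ℝ) 1) (k : ℕ) (hk : 2 ≤ k)
    (hpk : p * k ≤ 1) :
    (∀ q ∈ Set.Ioc (0:ℝ) 1, 1 - (1 - p*q)^k < q) ∧
    (∀ q ∈ Set.Icc (0:ℝ) 1, 1 - (1 - p*q)^k = q → q = 0) := by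
  obtain ⟨hp0, hp1⟩ := hp
  have hk2 : (2:ℝ) ≤ (k:ℝ) := by exact_mod_cast hk
  have main : ∀ q ∈ Set.Ioc (0:ℝ) 1, 1 - (1 - p*q)^k < q := by
    intro q ⟨hq0, hq1⟩
    rcases eq_or_lt_of_le hp0 with hp0' | hp0'
    · simp [← hp0', hq0]
    · -- p > 0, use strict Bernoulli via rpow
      have hs : -1 ≤ -(p*q) := by nlinarith
      have hs' : -(p*q) ≠ 0 := by nlinarith
      have hkp : (1:ℝ) < (k:ℝ) := by linarith
      have := one_add_mul_self_lt_rpow_one_add hs hs' hkp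
      rw [Real.rpow_natCast] at this
      have h1 : 1 + (k:ℝ) * -(p*q) < (1 - p*q)^k := by
        convert this using 2 <;> ring
      have h2 : (k:ℝ) * (p*q) ≤ q := by nlinarith
      nlinarith
  refine ⟨main, fun q ⟨hq0, hq1⟩ heq => ?_⟩
  by_contra h
  have : 0 < q := lt_of_le_of_ne hq0 (Ne.symm h)
  exact absurd heq (ne_of_lt (main q ⟨this, hq1⟩))
end

section
/- For k ≥ 2 and p ∈ (1/k, 1], if q* ∈ (0,1] is a fixed point of f_p(q) = 1 - (1-p·q)^k, then the derivative f_p'(0) = p·k > 1 and f_p'(q*) < 1. -/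
lemma deriv_aux (p x : ℝ) (k : ℕ) :
    deriv (fun q : ℝ => 1 - (1 - p*q)^k) x = p * k * (1 - p*x)^(k-1) := by
  have h1 : HasDerivAt (fun q : ℝ => 1 - p*q) (-p) x := by
    simpa using ((hasDerivAt_id x).const_mul p).const_sub 1
  have h2 := (h1.pow k).const_sub 1
  rw [(show HasDerivAt (fun q : ℝ => 1 - (1 - p*q)^k) (-(↑k * (1 - p * x) ^ (k - 1) * -p)) x from h2).deriv]
  ring

theorem stmt4 (p : ℝ) (k : ℕ) (hk : 2 ≤ k) (hp1 : 1/(k:ℝ) < p) (hp2 : p ≤ 1)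
    (qs : ℝ) (hqs : qs ∈ Set.Ioc (0:ℝ) 1) (hfix : 1 - (1 - p*qs)^k = qs) :
    deriv (fun q : ℝ => 1 - (1 - p*q)^k) 0 = p * k ∧ 1 < p * k ∧
    deriv (fun q : ℝ => 1 - (1 - p*q)^k) qs < 1 := by
  obtain ⟨hq0, hq1⟩ := hqs
  have hk0 : (0:ℝ) < k := by positivity
  have hpk : 1 < p * k := by
    rw [div_lt_iff₀ hk0] at hp1; linarith
  have hp0 : 0 < p := by
    have : (0:ℝ) < 1/(k:ℝ) := by positivity
    linarith
  refine ⟨by simp [deriv_aux], hpk, ?_⟩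
  rw [deriv_aux]
  set y := 1 - p*qs with hy
  have hy0 : 0 ≤ y := by nlinarith
  have hy1 : y < 1 := by nlinarith
  -- p * (geom sum) = 1
  have hgeom : (1 - y) * (∑ i ∈ Finset.range k, y^i) = 1 - y^k := by
    have := geom_sum_mul y k
    nlinarith [this]
  have hfix' : p * (1 - y^k) = 1 - y := by
    have : y^k = 1 - qs := by linarith [hfix]
    rw [this, hy]; ring
  have hS : p * (∑ i ∈ Finset.range k, y^i) = 1 := by
    have h1y : (0:ℝ) < 1 - y := by linarith
    have : p * ((1 - y) * (∑ i ∈ Finset.range k, y^i)) = 1 - y := by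
      rw [hgeom]; exact hfix'
    have := mul_left_cancel₀ (ne_of_gt h1y) (by linarith [this] : (1-y) * (p * ∑ i ∈ Finset.range k, y^i) = (1-y) * 1)
    linarith
  have hsum : (k:ℝ) * y^(k-1) < ∑ i ∈ Finset.range k, y^i := by
    have : ∑ _i ∈ Finset.range k, y^(k-1) < ∑ i ∈ Finset.range k, y^i := by
      apply Finset.sum_lt_sum
      · intro i hi
        exact pow_le_pow_of_le_one hy0 hy1.le (by
          have := Finset.mem_range.mp hi; omega)
      · refine ⟨0, Finset.mem_range.mpr (by omega), ?_⟩
        simpa using pow_lt_one₀ hy0 hy1 (by omega)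
    simpa using this
  calc p * k * y^(k-1) = p * ((k:ℝ) * y^(k-1)) := by ring
    _ < p * (∑ i ∈ Finset.range k, y^i) := by
        apply mul_lt_mul_of_pos_left hsum hp0
    _ = 1 := hS
end

section
/- Let k ≥ 2, p ∈ (1/k, 1], and let q* ∈ (0,1] be the unique positive fixed point of f_p(q) = 1 - (1-p·q)^k. Then for any q_0 ∈ (0,1], the sequence q_t = f_p(q_{t-1}) converges to q*, and the convergence is monotone (increasing if q_0 < q*, decreasing if q_0 > q*). -/
open Filter Set

private lemma aux_small (p : ℝ) (k : ℕ) (hk : 2 ≤ k) (hp1 : 1/(k:ℝ) < p) :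
    ∀ᶠ q in nhdsWithin 0 (Set.Ioi 0), q < 1 - (1 - p*q)^k := by
  have hk0 : (0:ℝ) < k := by
    have : (0:ℕ) < k := by omega
    exact_mod_cast this
  have hkp : 1 < (k:ℝ) * p := by
    rw [div_lt_iff₀ hk0] at hp1; linarith
  have h1 : HasDerivAt (fun q : ℝ => 1 - p*q) (-p) 0 := by
    simpa [Pi.sub_def] using (hasDerivAt_const (0:ℝ) (1:ℝ)).sub ((hasDerivAt_id (0:ℝ)).const_mul p)
  have h2 := h1.pow k
  have h3 : HasDerivAt (fun q : ℝ => 1 - (1-p*q)^k) ((k:ℝ)*p) 0 := by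
    have := (hasDerivAt_const (0:ℝ) (1:ℝ)).sub h2
    simpa [Pi.sub_def, Pi.pow_def] using this
  have hT := hasDerivAt_iff_tendsto_slope.1 h3
  have hev : ∀ᶠ q in nhdsWithin (0:ℝ) {(0:ℝ)}ᶜ, 1 < slope (fun q : ℝ => 1 - (1-p*q)^k) 0 q :=
    hT.eventually (lt_mem_nhds hkp)
  have hsub : Set.Ioi (0:ℝ) ⊆ {(0:ℝ)}ᶜ := fun x hx => ne_of_gt hx
  have hev2 := hev.filter_mono (nhdsWithin_mono 0 hsub)
  filter_upwards [hev2, self_mem_nhdsWithin] with q hq hq0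
  simp only [slope_def_field] at hq
  have hq0' : (0:ℝ) < q := hq0
  have heq : (1 - (1-p*q)^k - (1 - (1-p*0)^k)) / (q - 0) = (1 - (1-p*q)^k)/q := by
    simp
  rw [heq, lt_div_iff₀ hq0', one_mul] at hq
  linarith

theorem stmt5 (p : ℝ) (k : ℕ) (hk : 2 ≤ k) (hp1 : 1/(k:ℝ) < p) (hp2 : p ≤ 1)
    (qs : ℝ) (hqs : qs ∈ Set.Ioc (0:ℝ) 1) (hfix : 1 - (1 - p*qs)^k = qs)
    (huniq : ∀ q ∈ Set.Ioc (0:ℝ) 1, 1 - (1 - p*q)^k = q → q = qs)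
    (a : ℕ → ℝ) (h0 : a 0 ∈ Set.Ioc (0:ℝ) 1)
    (hrec : ∀ t, a (t+1) = 1 - (1 - p * a t)^k) :
    Filter.Tendsto a Filter.atTop (nhds qs) ∧
    (a 0 < qs → Monotone a) ∧ (qs < a 0 → Antitone a) := by
  have hk0 : (0:ℝ) < k := by
    have : (0:ℕ) < k := by omega
    exact_mod_cast this
  have hp0 : 0 < p := lt_trans (by positivity) hp1
  obtain ⟨hqs0, hqs1⟩ := hqs
  have hcont : Continuous (fun q : ℝ => 1 - (1-p*q)^k) := by fun_prop
  -- f maps (0,1] into (0,1]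
  have hmaps : ∀ q, 0 < q → q ≤ 1 → (1-(1-p*q)^k) ∈ Set.Ioc (0:ℝ) 1 := by
    intro q h1 h2
    have hb0 : 0 ≤ 1 - p*q := by nlinarith
    have hb1 : 1 - p*q < 1 := by nlinarith
    constructor
    · have := pow_lt_one₀ hb0 hb1 (by omega : k ≠ 0)
      linarith
    · have := pow_nonneg hb0 k
      linarith
  -- f monotone on [0,1]
  have hmono : ∀ x y : ℝ, 0 ≤ x → x ≤ y → y ≤ 1 → 1-(1-p*x)^k ≤ 1-(1-p*y)^k := by
    intro x y hx hxy hy1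
    have hb0 : 0 ≤ 1 - p*y := by nlinarith
    have : (1-p*y)^k ≤ (1-p*x)^k := pow_le_pow_left₀ hb0 (by nlinarith) k
    linarith
  -- sign: below qs, f q > q
  have hlo : ∀ q, 0 < q → q < qs → q < 1 - (1-p*q)^k := by
    intro q hq0 hqqs
    by_contra hle
    push_neg at hle
    rcases eq_or_lt_of_le hle with heq | hlt
    · have := huniq q ⟨hq0, le_trans (le_of_lt hqqs) hqs1⟩ heq
      linarith
    · -- f q < q; get ε small with f ε > ε, then IVT gives another root
      have hsm := aux_small p k hk hp1
      have hoo : Set.Ioo (0:ℝ) q ∈ nhdsWithin (0:ℝ) (Set.Ioi 0) :=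
        Ioo_mem_nhdsGT_of_mem (by constructor <;> [exact le_refl 0; exact hq0])
      obtain ⟨ε, hεf, hεo⟩ := (hsm.and (eventually_of_mem hoo (fun x hx => hx))).exists
      set g : ℝ → ℝ := fun x => 1 - (1-p*x)^k - x with hg
      have hgc : ContinuousOn g (Set.Icc ε q) := (hcont.sub continuous_id).continuousOn
      have hroot : (0:ℝ) ∈ Set.Ioo (g q) (g ε) := by
        constructor
        · simp only [hg]; linarith
        · simp only [hg]; linarith
      have := intermediate_value_Ioo' (le_of_lt hεo.2) hgc hroot
      obtain ⟨r, hr, hgr⟩ := this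
      have hr1 : 1 - (1-p*r)^k = r := by
        have : g r = 0 := hgr
        simp only [hg] at this; linarith
      have := huniq r ⟨lt_trans hεo.1 hr.1, by linarith [le_trans (le_of_lt hqqs) hqs1, hr.2]⟩ hr1
      linarith [hr.2]
  -- sign: above qs, f q < q
  have hhi : ∀ q, qs < q → q ≤ 1 → 1 - (1-p*q)^k < q := by
    intro q hqsq hq1
    have hqs1' : qs < 1 := lt_of_lt_of_le hqsq hq1
    have hg1 : 1 - (1-p*1)^k ≤ 1 := by
      have : (0:ℝ) ≤ (1-p*1)^k := pow_nonneg (by nlinarith) k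
      linarith
    have hg1' : 1 - (1-p*1)^k < 1 := by
      rcases eq_or_lt_of_le hg1 with heq | h
      · exact absurd (huniq 1 ⟨one_pos, le_refl 1⟩ heq) (by linarith)
      · exact h
    by_contra hle
    push_neg at hle
    rcases eq_or_lt_of_le hle with heq | hlt
    · have := huniq q ⟨lt_trans hqs0 hqsq, hq1⟩ heq.symm
      linarith
    · -- f q > q but f 1 < 1, IVT gives root in (q,1)
      have hq1' : q < 1 := by
        rcases eq_or_lt_of_le hq1 with h | h
        · exfalso; rw [h] at hlt; linarith
        · exact h
      set g : ℝ → ℝ := fun x => 1 - (1-p*x)^k - x with hg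
      have hgc : ContinuousOn g (Set.Icc q 1) := (hcont.sub continuous_id).continuousOn
      have hroot : (0:ℝ) ∈ Set.Ioo (g 1) (g q) := by
        constructor
        · simp only [hg]; linarith
        · simp only [hg]; linarith
      obtain ⟨r, hr, hgr⟩ := intermediate_value_Ioo' (le_of_lt hq1') hgc hroot
      have hr1 : 1 - (1-p*r)^k = r := by
        have : g r = 0 := hgr
        simp only [hg] at this; linarith
      have := huniq r ⟨lt_trans (lt_trans hqs0 hqsq) hr.1, le_of_lt hr.2⟩ hr1
      linarith [hr.1]
  -- limit identification helper
  have hlimfix : ∀ L : ℝ, Filter.Tendsto a Filter.atTop (nhds L) → 1 - (1-p*L)^k = L := by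
    intro L hL
    have h2 : Filter.Tendsto (fun t => a (t+1)) Filter.atTop (nhds L) :=
      hL.comp (tendsto_add_atTop_nat 1)
    have h3 : Filter.Tendsto (fun t => a (t+1)) Filter.atTop (nhds (1-(1-p*L)^k)) := by
      have := (hcont.tendsto L).comp hL
      simpa only [Function.comp_def, ← hrec] using this
    exact tendsto_nhds_unique h3 h2
  obtain ⟨ha00, ha01⟩ := h0
  rcases lt_trichotomy (a 0) qs with hc | hc | hc
  · -- increasing case
    have hbd : ∀ t, 0 < a t ∧ a t ≤ qs := by
      intro t
      induction t with
      | zero => exact ⟨ha00, le_of_lt hc⟩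
      | succ n ih =>
        rw [hrec n]
        constructor
        · exact (hmaps (a n) ih.1 (le_trans ih.2 hqs1)).1
        · calc 1 - (1-p*a n)^k ≤ 1 - (1-p*qs)^k :=
                hmono _ _ (le_of_lt ih.1) ih.2 hqs1
            _ = qs := hfix
    have hmon : Monotone a := by
      apply monotone_nat_of_le_succ
      intro t
      rcases eq_or_lt_of_le (hbd t).2 with heq | hlt
      · rw [hrec t, heq, hfix]
      · rw [hrec t]; exact le_of_lt (hlo (a t) (hbd t).1 hlt)
    have hbdd : BddAbove (Set.range a) := ⟨qs, by rintro x ⟨t, rfl⟩; exact (hbd t).2⟩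
    have hconv := tendsto_atTop_ciSup hmon hbdd
    have hLfix := hlimfix _ hconv
    have hL0 : 0 < ⨆ t, a t := lt_of_lt_of_le ha00 (le_ciSup hbdd 0)
    have hL1 : (⨆ t, a t) ≤ qs := ciSup_le (fun t => (hbd t).2)
    have hLqs : (⨆ t, a t) = qs := huniq _ ⟨hL0, le_trans hL1 hqs1⟩ hLfix
    rw [hLqs] at hconv
    exact ⟨hconv, fun _ => hmon, fun h => absurd h (by linarith)⟩
  · -- constant case
    have hconst : ∀ t, a t = qs := by
      intro t
      induction t with
      | zero => exact hc
      | succ n ih => rw [hrec n, ih, hfix]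
    have : a = fun _ => qs := funext hconst
    rw [this]
    exact ⟨tendsto_const_nhds, fun h => absurd h (by rw [hc] at hc ⊢; linarith),
      fun h => absurd h (by linarith)⟩
  · -- decreasing case
    have hbd : ∀ t, qs ≤ a t ∧ a t ≤ 1 := by
      intro t
      induction t with
      | zero => exact ⟨le_of_lt hc, ha01⟩
      | succ n ih =>
        rw [hrec n]
        constructor
        · calc qs = 1 - (1-p*qs)^k := hfix.symm
            _ ≤ 1 - (1-p*a n)^k := hmono _ _ (le_of_lt hqs0) ih.1 ih.2
        · exact (hmaps (a n) (lt_of_lt_of_le hqs0 ih.1) ih.2).2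
    have hant : Antitone a := by
      apply antitone_nat_of_succ_le
      intro t
      rcases eq_or_lt_of_le (hbd t).1 with heq | hlt
      · rw [hrec t, ← heq, hfix]
      · rw [hrec t]; exact le_of_lt (hhi (a t) hlt (hbd t).2)
    have hbdd : BddBelow (Set.range a) := ⟨qs, by rintro x ⟨t, rfl⟩; exact (hbd t).1⟩
    have hconv := tendsto_atTop_ciInf hant hbdd
    have hLfix := hlimfix _ hconv
    have hL0 : qs ≤ ⨅ t, a t := le_ciInf (fun t => (hbd t).1)
    have hL1 : (⨅ t, a t) ≤ 1 := le_trans (ciInf_le hbdd 0) ha01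
    have hLqs : (⨅ t, a t) = qs := huniq _ ⟨lt_of_lt_of_le hqs0 hL0, hL1⟩ hLfix
    rw [hLqs] at hconv
    exact ⟨hconv, fun h => absurd h (by linarith), fun _ => hant⟩
end

section
/- Let k ≥ 2 and p ∈ [0, 1/k]. Then for any q_0 ∈ [0,1], the sequence defined by q_t = f_p(q_{t-1}), with f_p(q) = 1 - (1-p·q)^k, converges monotonically (nonincreasing) to 0. -/
theorem stmt6 (p : ℝ) (k : ℕ) (hk : 2 ≤ k) (hp : p ∈ Set.Icc (0:ℝ) (1/(k:ℝ)))
    (a : ℕ → ℝ) (h0 : a 0 ∈ Set.Icc (0:ℝ) 1)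
    (hrec : ∀ t, a (t+1) = 1 - (1 - p * a t)^k) :
    Antitone a ∧ Filter.Tendsto a Filter.atTop (nhds 0) := by
  obtain ⟨hp0, hp1⟩ := hp
  have hk0 : (0:ℝ) < k := by
    have : (2:ℝ) ≤ k := by exact_mod_cast hk
    linarith
  have hkp : (k:ℝ) * p ≤ 1 := by
    have := (le_div_iff₀ hk0).mp hp1
    linarith
  have hp1' : p ≤ 1 := by
    calc p ≤ 1/(k:ℝ) := hp1
    _ ≤ 1 := by
      rw [div_le_one hk0]
      have : (2:ℝ) ≤ k := by exact_mod_cast hk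
      linarith
  -- invariant
  have hInv : ∀ t, 0 ≤ a t ∧ a t ≤ 1 := by
    intro t
    induction t with
    | zero => exact ⟨h0.1, h0.2⟩
    | succ n ih =>
      obtain ⟨h1, h2⟩ := ih
      have hpa0 : 0 ≤ p * a n := mul_nonneg hp0 h1
      have hpa1 : p * a n ≤ 1 := by nlinarith
      have hb0 : (0:ℝ) ≤ 1 - p * a n := by linarith
      have hb1 : (1:ℝ) - p * a n ≤ 1 := by linarith
      have hpow0 : 0 ≤ (1 - p * a n)^k := pow_nonneg hb0 k
      have hpow1 : (1 - p * a n)^k ≤ 1 := pow_le_one₀ hb0 hb1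
      rw [hrec n]
      constructor <;> linarith
  have hdec : ∀ t, a (t+1) ≤ a t := by
    intro t
    obtain ⟨h1, h2⟩ := hInv t
    have hbern : 1 + (k:ℝ) * (-(p * a t)) ≤ (1 + -(p * a t))^k := by
      apply one_add_mul_le_pow
      nlinarith
    rw [hrec t]
    have : (1 - p * a t)^k = (1 + -(p * a t))^k := by ring_nf
    rw [this]
    nlinarith [mul_nonneg (mul_nonneg (by linarith : (0:ℝ) ≤ 1 - (k:ℝ)*p) h1) (le_refl (0:ℝ))]
  have hanti : Antitone a := antitone_nat_of_succ_le hdec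
  refine ⟨hanti, ?_⟩
  have hbdd : BddBelow (Set.range a) := ⟨0, by rintro x ⟨n, rfl⟩; exact (hInv n).1⟩
  have hconv : Filter.Tendsto a Filter.atTop (nhds (⨅ n, a n)) :=
    tendsto_atTop_ciInf hanti hbdd
  set L := ⨅ n, a n with hLdef
  have hL0 : 0 ≤ L := le_ciInf (fun n => (hInv n).1)
  have hL1 : L ≤ 1 := le_trans (ciInf_le hbdd 0) h0.2
  have hshift : Filter.Tendsto (fun n => a (n+1)) Filter.atTop (nhds L) :=
    hconv.comp (Filter.tendsto_add_atTop_nat 1)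
  have hcont : Filter.Tendsto (fun n => 1 - (1 - p * a n)^k) Filter.atTop
      (nhds (1 - (1 - p * L)^k)) :=
    Filter.Tendsto.const_sub 1 (((hconv.const_mul p).const_sub 1).pow k)
  have hfix : L = 1 - (1 - p * L)^k := by
    refine tendsto_nhds_unique hshift ?_
    have : (fun n => a (n+1)) = fun n => 1 - (1 - p * a n)^k := funext hrec
    rw [this]; exact hcont
  have hLzero : L = 0 := by
    by_contra hne
    have hLpos : 0 < L := lt_of_le_of_ne hL0 (Ne.symm hne)
    rcases eq_or_lt_of_le hp0 with hpz | hppos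
    · rw [← hpz] at hfix; simp at hfix; exact hne hfix
    · set x := p * L with hx
      have hx0 : 0 < x := mul_pos hppos hLpos
      have hkx : (k:ℝ) * x ≤ L := by
        calc (k:ℝ) * (p * L) = ((k:ℝ) * p) * L := by ring
        _ ≤ 1 * L := by nlinarith
        _ = L := one_mul L
      have hx1 : x ≤ 1/2 := by
        have h2k : (2:ℝ) ≤ k := by exact_mod_cast hk
        nlinarith
      -- strict Bernoulli via (1-x)^k = (1-x)^2 * (1-x)^(k-2)
      have hb2 : 1 + ((k-2:ℕ):ℝ) * (-x) ≤ (1 + -x)^(k-2) :=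
        one_add_mul_le_pow (by linarith) (k-2)
      have hcast : ((k-2:ℕ):ℝ) = (k:ℝ) - 2 := by
        push_cast [hk]; ring
      rw [hcast] at hb2
      have hsplit : (1 + -x)^k = (1 + -x)^2 * (1 + -x)^(k-2) := by
        rw [← pow_add]; congr 1; omega
      have hstrict : 1 - (k:ℝ) * x < (1 - x)^k := by
        have h1x : (0:ℝ) ≤ 1 + -x := by linarith
        have hsq : (0:ℝ) ≤ (1 + -x)^2 := sq_nonneg _
        have : (1 + -x)^2 * (1 + -(((k:ℝ)-2)*x)) ≤ (1 + -x)^k := by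
          rw [hsplit]
          apply mul_le_mul_of_nonneg_left _ hsq
          exact le_trans (le_of_eq (by ring)) hb2
        have hexp : (1:ℝ) - x = 1 + -x := by ring
        rw [hexp]
        have h2k : (2:ℝ) ≤ k := by exact_mod_cast hk
        nlinarith [sq_nonneg x, mul_pos hx0 hx0]
      -- L = 1 - (1-x)^k < 1 - (1 - k x) = k x ≤ L, contradiction
      have : L < (k:ℝ) * x := by
        rw [hfix]; rw [hx]; linarith [hstrict]
      linarith
  rw [hLzero] at hconv
  exact hconv
end

section
/- For k ≥ 2 an integer, define the map p ↦ q*(p) on (1/k, 1] where q*(p) is the unique positive fixed point of f_p(q) = 1 - (1-p·q)^k. Then q* is strictly increasing on (1/k, 1]. -/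
theorem stmt7 (k : ℕ) (hk : 2 ≤ k) (qstar : ℝ → ℝ)
    (h : ∀ p ∈ Set.Ioc (1/(k:ℝ)) 1,
      qstar p ∈ Set.Ioc (0:ℝ) 1 ∧ 1 - (1 - p * qstar p)^k = qstar p) :
    StrictMonoOn qstar (Set.Ioc (1/(k:ℝ)) 1) := by
  intro p1 hp1 p2 hp2 hlt
  obtain ⟨⟨hq1pos, hq1le⟩, heq1⟩ := h p1 hp1
  obtain ⟨⟨hq2pos, hq2le⟩, heq2⟩ := h p2 hp2
  set q1 := qstar p1
  set q2 := qstar p2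
  by_contra hle
  push_neg at hle
  have hkpos : (0:ℝ) < (k:ℝ) := by positivity
  have hp1pos : 0 < p1 := lt_trans (by positivity) hp1.1
  have hp2pos : 0 < p2 := lt_trans hp1pos hlt
  have h1q2 : q2 ≤ q1 := hle
  set t : ℝ := q2 / q1 with ht
  have ht0 : 0 ≤ t := by positivity
  have ht1 : t ≤ 1 := by
    rw [ht, div_le_one hq1pos]; exact h1q2
  have htq : t * q1 = q2 := div_mul_cancel₀ q2 (ne_of_gt hq1pos)
  have hx : (1:ℝ) - p1 * q1 ∈ Set.Ici (0:ℝ) := by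
    have : p1 * q1 ≤ 1 := mul_le_one₀ hp1.2 (le_of_lt hq1pos) hq1le
    simpa using this
  have hy : (1:ℝ) ∈ Set.Ici (0:ℝ) := by norm_num
  have hconv := (convexOn_pow k).2 hx hy ht0 (by linarith : (0:ℝ) ≤ 1 - t)
    (by ring : t + (1 - t) = 1)
  have hcomb : t • (1 - p1 * q1) + (1 - t) • (1:ℝ) = 1 - p1 * q2 := by
    simp only [smul_eq_mul]
    nlinarith [htq]
  rw [hcomb] at hconv
  simp only [smul_eq_mul, one_pow, mul_one] at hconv
  have hpow1 : (1 - p1 * q1)^k = 1 - q1 := by linarith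
  rw [hpow1] at hconv
  have hkey : (1 - p1 * q2)^k ≤ 1 - q2 := by nlinarith [htq]
  -- strict monotonicity in p
  have hbase : 1 - p2 * q2 < 1 - p1 * q2 := by nlinarith
  have hb0 : 0 ≤ 1 - p2 * q2 := by
    have : p2 * q2 ≤ 1 := mul_le_one₀ hp2.2 (le_of_lt hq2pos) hq2le
    linarith
  have hstrict : (1 - p2 * q2)^k < (1 - p1 * q2)^k :=
    pow_lt_pow_left₀ hbase hb0 (by omega)
  linarith
end

section
/- For k ≥ 2 an integer, the function q*(p) (the unique positive fixed point of f_p(q) = 1 - (1-p·q)^k for p > 1/k, extended by q*(p) = 0 for p ≤ 1/k) is continuous at p = 1/k, i.e., q*(p) → 0 as p ↓ 1/k. -/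
/-- Second-order Bernoulli-type lower bound for `(1-t)^(m+2)` on `[0, 3/4]`. -/
lemma bern_aux (m : ℕ) (t : ℝ) (ht0 : 0 ≤ t) (ht1 : t ≤ 3/4) :
    1 - ((m:ℝ)+2)*t + (((m:ℝ)+2)*((m:ℝ)+1)/2) * (1/4)^m * t^2 ≤ (1-t)^(m+2) := by
  induction m with
  | zero => norm_num; nlinarith
  | succ n ih =>
    have h4 : (0:ℝ) < (1/4:ℝ)^n := by positivity
    have h4' : ((1:ℝ)/4)^n ≤ 1 := pow_le_one₀ (by norm_num) (by norm_num)
    have hq : (1:ℝ)/4 ≤ 1 - t := by linarith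
    have key : (1-t)^(n+1+2) = (1-t) * (1-t)^(n+2) := by ring
    have hmul := mul_le_mul_of_nonneg_left ih (by linarith : (0:ℝ) ≤ 1 - t)
    rw [key]
    push_cast
    push_cast at hmul
    have hpow : ((1:ℝ)/4)^(n+1) = (1/4) * (1/4)^n := by ring
    rw [hpow]
    have hn : (0:ℝ) ≤ (n:ℝ) := Nat.cast_nonneg n
    nlinarith [hmul, sq_nonneg t,
      mul_nonneg (mul_nonneg h4.le (by linarith : (0:ℝ) ≤ 3/4 - t)) (sq_nonneg t),
      mul_nonneg (sq_nonneg t) (by linarith : (0:ℝ) ≤ 1 - (1/4:ℝ)^n),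
      mul_nonneg hn (mul_nonneg (mul_nonneg h4.le (by linarith : (0:ℝ) ≤ 3/4 - t)) (sq_nonneg t)),
      mul_nonneg hn (mul_nonneg (sq_nonneg t) (by linarith : (0:ℝ) ≤ 1 - (1/4:ℝ)^n)),
      mul_nonneg (mul_nonneg hn hn) (mul_nonneg (mul_nonneg h4.le (by linarith : (0:ℝ) ≤ 3/4 - t)) (sq_nonneg t))]

set_option maxHeartbeats 1000000 in
theorem stmt8 (k : ℕ) (hk : 2 ≤ k) (qstar : ℝ → ℝ)
    (h : ∀ p ∈ Set.Ioc (1/(k:ℝ)) 1,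
      qstar p ∈ Set.Ioc (0:ℝ) 1 ∧ 1 - (1 - p * qstar p)^k = qstar p)
    (h0 : ∀ p ∈ Set.Icc (0:ℝ) (1/(k:ℝ)), qstar p = 0) :
    Filter.Tendsto qstar (nhdsWithin (1/(k:ℝ)) (Set.Ioi (1/(k:ℝ)))) (nhds 0) := by
  obtain ⟨m, rfl⟩ : ∃ m, k = m + 2 := ⟨k - 2, by omega⟩
  set K : ℝ := (m:ℝ) + 2 with hK
  have hK0 : (0:ℝ) < K := by positivity
  have hK1 : (1:ℝ) ≤ K := by have hn : (0:ℝ) ≤ (m:ℝ) := Nat.cast_nonneg m; rw [hK]; linarith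
  set B : ℝ := (K*((m:ℝ)+1)/2) * (1/4)^m with hB
  have hB0 : (0:ℝ) < B := by positivity
  have hcast : ((m + 2 : ℕ) : ℝ) = K := by push_cast [hK]; ring
  -- the dominating function
  set g : ℝ → ℝ := fun p => K^2 * (K*p - 1) / B with hg
  clear_value K
  have hg0 : g (1/K) = 0 := by
    rw [hg]
    simp only
    rw [mul_one_div, div_self (ne_of_gt hK0)]
    ring
  have hgt : Filter.Tendsto g (nhdsWithin (1/(↑(m+2):ℝ)) (Set.Ioi (1/(↑(m+2):ℝ)))) (nhds 0) := by
    have hc : Continuous g := by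
      rw [hg]
      apply Continuous.div_const
      continuity
    have := hc.continuousAt (x := 1/K)
    rw [ContinuousAt, hg0] at this
    rw [hcast]
    exact this.mono_left nhdsWithin_le_nhds
  have hinv : 1/(↑(m+2):ℝ) = 1/K := by rw [hcast]
  clear_value B g
  -- eventually p < 3/4 and p > 1/K
  have hev : ∀ᶠ p in nhdsWithin (1/(↑(m+2):ℝ)) (Set.Ioi (1/(↑(m+2):ℝ))),
      p ∈ Set.Ioo (1/K) (3/4) := by
    rw [hinv]
    apply Ioo_mem_nhdsGT_of_mem
    constructor
    · exact le_refl _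
    · have : 1/K ≤ 1/2 := by
        rw [div_le_div_iff₀ hK0 (by norm_num)]
        norm_num [hK]
      linarith
  have hbound : ∀ᶠ p in nhdsWithin (1/(↑(m+2):ℝ)) (Set.Ioi (1/(↑(m+2):ℝ))),
      qstar p ≤ g p ∧ 0 ≤ qstar p := by
    filter_upwards [hev] with p hp
    obtain ⟨hp1, hp2⟩ := hp
    have hpmem : p ∈ Set.Ioc (1/(↑(m+2):ℝ)) 1 := ⟨by rw [hinv]; exact hp1, by linarith⟩
    obtain ⟨⟨hq0, hq1⟩, hfix⟩ := h p hpmem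
    set q := qstar p with hqdef
    have hp0 : 0 < p := lt_trans (by positivity) hp1
    have ht0 : 0 ≤ p * q := by positivity
    have ht1 : p * q ≤ 3/4 := by nlinarith
    have hb := bern_aux m (p*q) ht0 ht1
    have hfix' : (1 - p*q)^(m+2) = 1 - q := by linarith [hfix]
    rw [hfix'] at hb
    -- hb : 1 - K*(p*q) + B*(p*q)^2 ≤ 1 - q  (after identifying casts)
    have hb' : 1 - K*(p*q) + B*(p*q)^2 ≤ 1 - q := by
      calc 1 - K*(p*q) + B*(p*q)^2
          = 1 - ((m:ℝ)+2)*(p*q) + (((m:ℝ)+2)*((m:ℝ)+1)/2) * (1/4)^m * (p*q)^2 := by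
            rw [hB, hK]
        _ ≤ 1 - q := hb
    -- so B p² q ≤ K p - 1, hence q ≤ (Kp-1)/(Bp²) ≤ K²(Kp-1)/B = g p
    have h1 : B * p^2 * q ≤ K*p - 1 := by
      have : B * p^2 * q^2 ≤ q * (K*p - 1) := by nlinarith
      have hq2 : B * p^2 * q * q ≤ (K*p - 1) * q := by nlinarith
      exact le_of_mul_le_mul_right (by linarith [hq2]) hq0
    have hpK : 1/K < p := hp1
    have hp2K : 1/K^2 < p^2 := by
      have : (1/K)^2 < p^2 := by
        have hpos : 0 < 1/K := by positivity
        apply sq_lt_sq' (by linarith) hpK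
      calc 1/K^2 = (1/K)^2 := by ring
        _ < p^2 := this
    have hKp1 : 0 < K*p - 1 := by
      have h2 := (div_lt_iff₀ hK0).mp hpK
      nlinarith
    constructor
    · rw [hg, le_div_iff₀ hB0]
      -- q * B ≤ K^2 * (K*p - 1) : from B p² q ≤ Kp-1 and p² > 1/K²
      have h2 : B * (1/K^2) * q ≤ B * p^2 * q := by
        have h2a := mul_le_mul_of_nonneg_left hp2K.le (mul_pos hB0 hq0).le
        linarith [h2a]
      have h3 : B * (1/K^2) * q ≤ K*p - 1 := le_trans h2 h1
      have hK2 : (0:ℝ) < K^2 := by positivity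
      have h4 := mul_le_mul_of_nonneg_left h3 hK2.le
      have h5 : K^2 * (B * (1/K^2) * q) = B * q := by field_simp
      rw [h5] at h4
      linarith
    · exact hq0.le
  have hle := hbound.mono (fun p hp => hp.1)
  have hge := hbound.mono (fun p hp => hp.2)
  exact squeeze_zero' hge hle hgt
end

section
/- For a positive fixed point q ∈ (0,1) of q = 1 - (1 - p·q)^k, one can solve p = (1 - (1-q)^{1/k})/q, and this expression is strictly increasing in q on (0,1). -/
theorem stmt9 (k : ℕ) (hk : 2 ≤ k) :
    StrictMonoOn (fun q : ℝ => (1 - (1-q) ^ ((k:ℝ)⁻¹)) / q) (Set.Ioo 0 1) ∧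
    ∀ p ∈ Set.Icc (0:ℝ) 1, ∀ q ∈ Set.Ioo (0:ℝ) 1,
      (q = 1 - (1 - p*q)^k ↔ p = (1 - (1-q) ^ ((k:ℝ)⁻¹)) / q) := by
  have hk0 : k ≠ 0 := by omega
  have hα0 : (0:ℝ) < (k:ℝ)⁻¹ := by positivity
  have hα1 : (k:ℝ)⁻¹ < 1 := by
    rw [inv_lt_one_iff₀]; right; exact_mod_cast by omega
  have hconc := Real.strictConcaveOn_rpow hα0 hα1
  constructor
  · rintro x ⟨hx0, hx1⟩ y ⟨hy0, hy1⟩ hxy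
    set α := (k:ℝ)⁻¹
    have ht0 : 0 < x / y := by positivity
    have ht1 : x / y < 1 := (div_lt_one hy0).2 hxy
    set t := x / y with htdef
    have hty : t * y = x := div_mul_cancel₀ x hy0.ne'
    have hcomb : t * (1 - y) + (1 - t) = 1 - x := by rw [← hty]; ring
    have hkey : t * (1-y) ^ α + (1 - t) * 1 ^ α < (1 - x) ^ α := by
      have := hconc.2 (by simp [le_of_lt hy1] : (1:ℝ) - y ∈ Set.Ici (0:ℝ))
        (by norm_num : (1:ℝ) ∈ Set.Ici (0:ℝ)) (by linarith)
        ht0 (show (0:ℝ) < 1 - t by linarith) (show t + (1 - t) = 1 by ring)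
      simpa [hcomb] using this
    rw [Real.one_rpow] at hkey
    have hfx : 1 - (1-x) ^ α < t * (1 - (1-y) ^ α) := by nlinarith
    rw [div_lt_div_iff₀ hx0 hy0]
    have h5 := mul_lt_mul_of_pos_right hfx hy0
    have heq : t * (1 - (1-y) ^ α) * y = (1 - (1-y) ^ α) * x := by rw [← hty]; ring
    linarith
  · rintro p ⟨hp0, hp1⟩ q ⟨hq0, hq1⟩
    have hpq : p * q < 1 := lt_of_le_of_lt (by nlinarith) hq1
    constructor
    · intro h
      have h2 : (1 - p*q)^k = 1 - q := by linarith
      have h3 : (1-q) ^ ((k:ℝ)⁻¹) = 1 - p*q := by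
        rw [← h2, Real.pow_rpow_inv_natCast (by linarith) hk0]
      rw [h3]; field_simp; ring
    · intro h
      have h2 : p * q = 1 - (1-q) ^ ((k:ℝ)⁻¹) := by
        rw [h]; field_simp
      have : (1 - p*q)^k = 1 - q := by
        have : 1 - p*q = (1-q) ^ ((k:ℝ)⁻¹) := by linarith
        rw [this, Real.rpow_inv_natCast_pow (by linarith) hk0]
      linarith
end

section
/- For k ≥ 2, the right derivative of the positive-fixed-point map q*(p) at p = 1/k equals 2k²/(k-1); that is, lim_{p ↓ 1/k} q*(p)/(p - 1/k) = 2k²/(k-1). -/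
open Filter Set Finset

theorem stmt10 (k : ℕ) (hk : 2 ≤ k) (qstar : ℝ → ℝ)
    (h : ∀ p ∈ Set.Ioc (1/(k:ℝ)) 1,
      qstar p ∈ Set.Ioc (0:ℝ) 1 ∧ 1 - (1 - p * qstar p)^k = qstar p)
    (h0 : qstar (1/(k:ℝ)) = 0) :
    Filter.Tendsto (fun p => qstar p / (p - 1/(k:ℝ)))
      (nhdsWithin (1/(k:ℝ)) (Set.Ioi (1/(k:ℝ))))
      (nhds (2*(k:ℝ)^2/((k:ℝ)-1))) := by
  have hk1 : (1:ℝ) < k := by exact_mod_cast hk.trans_lt' one_lt_two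
  have hkpos : (0:ℝ) < k := by linarith
  set a : ℝ := 1/(k:ℝ) with ha
  have hapos : 0 < a := by positivity
  have ha1 : a < 1 := by rw [ha, div_lt_one hkpos]; exact hk1
  set S : ℝ → ℝ := fun t => ∑ j ∈ Finset.range k, (1-t)^j with hS
  set U : ℝ → ℝ := fun t => ∑ j ∈ Finset.range k, ∑ i ∈ Finset.range j, (1-t)^i with hU
  have hid : ∀ (n : ℕ) (t : ℝ), t * ∑ i ∈ Finset.range n, (1-t)^i = 1 - (1-t)^n := by
    intro n t; linear_combination -geom_sum_mul (1-t) n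
  have hid2 : ∀ t : ℝ, (k:ℝ) - S t = t * U t := by
    intro t
    rw [hU, Finset.mul_sum, hS]
    simp_rw [hid]
    rw [Finset.sum_sub_distrib]
    simp
  have hU0 : U 0 = k*(k-1)/2 := by
    have : ∀ n : ℕ, (∑ i ∈ Finset.range n, (i:ℝ)) = n*(n-1)/2 := by
      intro n
      induction n with
      | zero => simp
      | succ m ih => rw [Finset.sum_range_succ, ih]; push_cast; ring
    rw [hU]; simp; exact this k
  have hUone : ∀ t : ℝ, t ≤ 1 → (1:ℝ) ≤ U t := by
    intro t ht
    have h1t : (0:ℝ) ≤ 1 - t := by linarith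
    have hmem : k - 1 ∈ Finset.range k := by
      simp [Finset.mem_range]; omega
    have hinner : (1:ℝ) ≤ ∑ i ∈ Finset.range (k-1), (1-t)^i := by
      have h0mem : 0 ∈ Finset.range (k-1) := by simp [Finset.mem_range]; omega
      calc (1:ℝ) = (1-t)^0 := by norm_num
        _ ≤ _ := Finset.single_le_sum (f := fun i => (1-t)^i)
            (fun i _ => pow_nonneg h1t i) h0mem
    calc (1:ℝ) ≤ ∑ i ∈ Finset.range (k-1), (1-t)^i := hinner
      _ ≤ U t := Finset.single_le_sum
          (f := fun j => ∑ i ∈ Finset.range j, (1-t)^i)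
          (fun j _ => Finset.sum_nonneg fun i _ => pow_nonneg h1t i) hmem
  have hUcont : Continuous U := by
    rw [hU]
    exact continuous_finset_sum _ fun j _ => continuous_finset_sum _ fun i _ => by fun_prop
  -- key facts on Ioo a 1
  have key : ∀ p ∈ Set.Ioo a 1,
      ((k:ℝ) - 1/p = p * qstar p * U (p * qstar p)) ∧
      qstar p / (p - a) = k / (p^2 * U (p * qstar p)) := by
    intro p hp
    obtain ⟨hq, heq⟩ := h p ⟨hp.1, hp.2.le⟩
    set q := qstar p with hqd
    have hppos : 0 < p := hapos.trans hp.1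
    have hqpos : 0 < q := hq.1
    have htle1 : p * q ≤ 1 := by
      nlinarith [hq.2, hp.2]
    have h1 : p * q * S (p*q) = q := by
      rw [hS]; rw [hid k (p*q)]; exact heq
    have hpS : p * S (p*q) = 1 := by
      have h1' : q * (p * S (p*q)) = q * 1 := by linear_combination h1
      exact mul_left_cancel₀ hqpos.ne' h1'
    have hkey : (k:ℝ) - 1/p = p * q * U (p*q) := by
      have h2 := hid2 (p*q)
      have hSv : S (p*q) = 1/p := by
        field_simp; linarith [hpS]
      rw [hSv] at h2; linarith
    refine ⟨hkey, ?_⟩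
    have hUpos : (0:ℝ) < U (p*q) := lt_of_lt_of_le one_pos (hUone _ htle1)
    have hpa : p - a ≠ 0 := by have := hp.1; intro hc; linarith [sub_pos.mpr this]
    have hE : (k:ℝ)*p - 1 = p^2 * q * U (p*q) := by
      have := hkey
      field_simp at this
      nlinarith [this]
    have hpa1 : p - 1/(k:ℝ) ≠ 0 := by rw [← ha]; exact hpa
    have hden1 : p^2 * U (p*q) ≠ 0 := by positivity
    rw [ha, div_eq_div_iff hpa1 hden1]
    field_simp
    linear_combination -hE + q*p^2 * congrArg U (mul_comm q p)
  -- pq → 0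
  have hIoo : Set.Ioo a 1 ∈ nhdsWithin a (Set.Ioi a) :=
    Ioo_mem_nhdsGT_of_mem ⟨le_refl a, ha1⟩
  have htend0 : Tendsto (fun p => p * qstar p) (nhdsWithin a (Set.Ioi a)) (nhds 0) := by
    have hub : Tendsto (fun p : ℝ => (k:ℝ) - 1/p) (nhdsWithin a (Set.Ioi a)) (nhds 0) := by
      have hc : ContinuousAt (fun p : ℝ => (k:ℝ) - 1/p) a :=
        continuousAt_const.sub (continuousAt_const.div continuousAt_id hapos.ne')
      have := hc.tendsto.mono_left (nhdsWithin_le_nhds (s := Set.Ioi a))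
      simpa [ha, one_div_one_div] using this
    apply squeeze_zero' ?_ ?_ hub
    · filter_upwards [hIoo] with p hp
      obtain ⟨hq, _⟩ := h p ⟨hp.1, hp.2.le⟩
      exact mul_nonneg (hapos.trans hp.1).le hq.1.le
    · filter_upwards [hIoo] with p hp
      have hkey := (key p hp).1
      obtain ⟨hq, _⟩ := h p ⟨hp.1, hp.2.le⟩
      have hppos : 0 < p := hapos.trans hp.1
      have htle1 : p * qstar p ≤ 1 := by nlinarith [hq.2, hp.2]
      have := hUone _ htle1
      nlinarith [mul_nonneg (mul_nonneg hppos.le hq.1.le)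
        (by linarith : (0:ℝ) ≤ U (p * qstar p) - 1)]
  -- main limit
  have hmain : Tendsto (fun p => (k:ℝ) / (p^2 * U (p * qstar p)))
      (nhdsWithin a (Set.Ioi a)) (nhds (2*(k:ℝ)^2/((k:ℝ)-1))) := by
    have hUt : Tendsto (fun p => U (p * qstar p)) (nhdsWithin a (Set.Ioi a)) (nhds (U 0)) :=
      (hUcont.tendsto 0).comp htend0
    have hpt : Tendsto (fun p : ℝ => p^2) (nhdsWithin a (Set.Ioi a)) (nhds (a^2)) :=
      ((continuous_id.pow 2).tendsto a).mono_left nhdsWithin_le_nhds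
    have hden : Tendsto (fun p => p^2 * U (p * qstar p)) (nhdsWithin a (Set.Ioi a))
        (nhds (a^2 * U 0)) := hpt.mul hUt
    have hdne : a^2 * U 0 ≠ 0 := by
      rw [hU0]; have hk1' : (0:ℝ) < (k:ℝ)-1 := by linarith
      positivity
    have := (tendsto_const_nhds (x := (k:ℝ))).div hden hdne
    convert this using 2
    · rfl
    rw [hU0, ha]
    have hne1 : (k:ℝ) - 1 ≠ 0 := by linarith
    field_simp [hkpos.ne']
  refine Filter.Tendsto.congr' ?_ hmain
  filter_upwards [hIoo] with p hp
  exact ((key p hp).2).symm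
end
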